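/- Let (Ω, 𝓕, μ) be a probability space, E a measurable space, T_rct, T_synth : Ω → Bool measurable, and W : Ω → E measurable. Suppose T_rct is independent of the pair ω ↦ (T_synth ω, W ω) under μ and μ({ω | T_rct ω = true}) = 1/2. Then the acceptance event A = {ω | T_rct ω = T_synth ω} is independent of W: for every measurable set S ⊆ E, μ(A ∩ W⁻¹(S)) = μ(A) · μ(W⁻¹(S)). -/
import Mathlib


open MeasureTheory ProbabilityTheory

theorem acceptance_indep_of_W {Ω E : Type*} [MeasurableSpace Ω] [MeasurableSpace E]
    (μ : Measure Ω) [IsProbabilityMeasure μ]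
    (Trct Tsynth : Ω → Bool) (W : Ω → E)
    (hTrct : Measurable Trct) (hTsynth : Measurable Tsynth) (hW : Measurable W)
    (hindep : IndepFun Trct (fun ω => (Tsynth ω, W ω)) μ)
    (hbal : μ {ω | Trct ω = true} = 1/2) :
    ∀ S : Set E, MeasurableSet S →
      μ ({ω | Trct ω = Tsynth ω} ∩ W ⁻¹' S)
        = μ {ω | Trct ω = Tsynth ω} * μ (W ⁻¹' S) := by
  have hpair : Measurable (fun ω => (Tsynth ω, W ω)) := hTsynth.prodMk hW
  have hfalse : μ {ω | Trct ω = false} = 1/2 := by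
    have hc : {ω | Trct ω = false} = {ω | Trct ω = true}ᶜ := by
      ext ω; simp [Bool.not_eq_true]
    have hms : MeasurableSet {ω | Trct ω = true} := hTrct (measurableSet_singleton true)
    rw [hc, measure_compl hms (measure_ne_top μ _), measure_univ, hbal, one_div]
    rw [ENNReal.one_sub_inv_two]
  have key : ∀ S : Set E, MeasurableSet S →
      μ ({ω | Trct ω = Tsynth ω} ∩ W ⁻¹' S) = 1/2 * μ (W ⁻¹' S) := by
    intro S hS
    have hdecomp : {ω | Trct ω = Tsynth ω} ∩ W ⁻¹' S
        = (Trct ⁻¹' {true} ∩ (fun ω => (Tsynth ω, W ω)) ⁻¹' ({true} ×ˢ S))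
          ∪ (Trct ⁻¹' {false} ∩ (fun ω => (Tsynth ω, W ω)) ⁻¹' ({false} ×ˢ S)) := by
      ext ω
      simp only [Set.mem_inter_iff, Set.mem_union, Set.mem_preimage, Set.mem_prod,
        Set.mem_singleton_iff, Set.mem_setOf_eq]
      cases h1 : Trct ω <;> cases h2 : Tsynth ω <;> simp [h1, h2]
    have hdisj : Disjoint
        (Trct ⁻¹' {true} ∩ (fun ω => (Tsynth ω, W ω)) ⁻¹' ({true} ×ˢ S))
        (Trct ⁻¹' {false} ∩ (fun ω => (Tsynth ω, W ω)) ⁻¹' ({false} ×ˢ S)) := by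
      apply Set.disjoint_left.mpr
      rintro ω ⟨h1, -⟩ ⟨h2, -⟩
      simp only [Set.mem_preimage, Set.mem_singleton_iff] at h1 h2
      rw [h1] at h2; exact Bool.noConfusion h2
    have hm2 : MeasurableSet (Trct ⁻¹' {false} ∩
        (fun ω => (Tsynth ω, W ω)) ⁻¹' ({false} ×ˢ S)) :=
      (hTrct (measurableSet_singleton false)).inter
        (hpair ((measurableSet_singleton false).prod hS))
    rw [hdecomp, measure_union hdisj hm2]
    have h1 := hindep.measure_inter_preimage_eq_mul {true} ({true} ×ˢ S)
      (measurableSet_singleton true) ((measurableSet_singleton true).prod hS)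
    have h2 := hindep.measure_inter_preimage_eq_mul {false} ({false} ×ˢ S)
      (measurableSet_singleton false) ((measurableSet_singleton false).prod hS)
    rw [h1, h2]
    have e1 : μ (Trct ⁻¹' {true}) = 1/2 := hbal
    have e2 : μ (Trct ⁻¹' {false}) = 1/2 := hfalse
    rw [e1, e2, ← mul_add]
    congr 1
    have hsplit : W ⁻¹' S
        = ((fun ω => (Tsynth ω, W ω)) ⁻¹' ({true} ×ˢ S))
          ∪ ((fun ω => (Tsynth ω, W ω)) ⁻¹' ({false} ×ˢ S)) := by
      ext ω
      simp only [Set.mem_union, Set.mem_preimage, Set.mem_prod, Set.mem_singleton_iff]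
      cases h2 : Tsynth ω <;> simp
    have hdisj2 : Disjoint ((fun ω => (Tsynth ω, W ω)) ⁻¹' ({true} ×ˢ S))
        ((fun ω => (Tsynth ω, W ω)) ⁻¹' ({false} ×ˢ S)) := by
      apply Set.disjoint_left.mpr
      rintro ω ⟨h1, -⟩ ⟨h2, -⟩
      simp only at h1 h2; rw [h1] at h2; exact Bool.noConfusion h2
    rw [hsplit, measure_union hdisj2 (hpair ((measurableSet_singleton false).prod hS))]
  intro S hS
  have hA : μ {ω | Trct ω = Tsynth ω} = 1/2 := by
    have := key Set.univ MeasurableSet.univ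
    simpa using this
  rw [key S hS, hA]
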